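/- Let π be a stationary distribution of M_R. Then for every x ∈ R: (1 − (1−α)·∑_{r∈F_x} β(r))·π(x) = α/|R| + (1−α)·∑_{y∈R : xR ⊊ yR} (∑_{r∈R : y·r = x} β(r))·π(y), where the outer sum is over all y ∈ R whose principal ideal strictly contains the principal ideal generated by x. -/

import Mathlib

open Finset

open scoped Classical

/-- The multiplication part `B_R` of the transition matrix:
`B_R(a,b) = ∑_{x ∈ R : a·x = b} β(x)`. -/
noncomputable def Bmat (R : Type) [CommRing R] [Fintype R] (β : R → ℝ) :
    Matrix R R ℝ :=
  fun a b => ∑ x ∈ Finset.univ.filter (fun x => a * x = b), β x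

/-- The transition matrix `M_R(a,b) = α/|R| + (1−α)·B_R(a,b)`. -/
noncomputable def Mmat (R : Type) [CommRing R] [Fintype R] (α : ℝ) (β : R → ℝ) :
    Matrix R R ℝ :=
  fun a b => α / (Fintype.card R : ℝ) + (1 - α) * Bmat R β a b

/-- The annihilator ideal `ann(a) = {x ∈ R : x·a = 0}`. -/
def annId {R : Type} [CommRing R] (a : R) : Ideal R where
  carrier := {x | x * a = 0}
  add_mem' := by
    intro x y hx hy
    simp only [Set.mem_setOf_eq] at *
    rw [add_mul, hx, hy, add_zero]
  zero_mem' := by simp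
  smul_mem' := by
    intro c x hx
    simp only [smul_eq_mul, Set.mem_setOf_eq] at *
    rw [mul_assoc, hx, mul_zero]

section AuxLemmas

variable {R : Type} [CommRing R] [Fintype R]

/-- In a finite monoid, some positive power of every element is idempotent. -/
lemma exists_idem_pow (w : R) :
    ∃ k : ℕ, w ^ (k+1) * w ^ (k+1) = w ^ (k+1) := by
  obtain ⟨m, n, hmn, h⟩ := Finite.exists_ne_map_eq_of_infinite (fun n : ℕ => w ^ n)
  wlog hlt : m < n generalizing m n
  · exact this n m hmn.symm h.symm (by omega)
  have key : ∀ N, m ≤ N → w ^ (N + (n - m)) = w ^ N := by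
    intro N hN
    have h1 : w ^ (N + (n - m)) = w ^ n * w ^ (N - m) := by
      rw [← pow_add]; congr 1; omega
    have h2 : w ^ N = w ^ m * w ^ (N - m) := by
      rw [← pow_add]; congr 1; omega
    rw [h1, h2, h]
  have iter : ∀ j N, m ≤ N → w ^ (N + j * (n - m)) = w ^ N := by
    intro j
    induction j with
    | zero => simp
    | succ j ih =>
      intro N hN
      have : N + (j+1) * (n - m) = (N + (n-m)) + j * (n-m) := by ring
      rw [this, ih _ (by omega), key _ hN]
  refine ⟨(m+1) * (n-m) - 1, ?_⟩
  have hk : (m+1) * (n-m) - 1 + 1 = (m+1) * (n-m) := by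
    have h1 : 1 ≤ n - m := by omega
    have : 1 ≤ (m+1) * (n-m) :=
      le_trans (by omega) (Nat.mul_le_mul_left _ h1)
    omega
  rw [hk, ← pow_add]
  have hge : m ≤ (m+1)*(n-m) := by
    have h1 : 1 ≤ n - m := by omega
    calc m ≤ (m+1) * 1 := by omega
    _ ≤ (m+1) * (n-m) := Nat.mul_le_mul_left _ h1
  exact iter (m+1) ((m+1)*(n-m)) hge

/-- In a finite commutative ring, equal principal ideals come from multiplication
by a unit. -/
lemma unit_of_span_eq {x a : R}
    (h : Ideal.span ({a} : Set R) = Ideal.span ({x} : Set R)) :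
    ∃ u : Rˣ, a = x * u := by
  obtain ⟨t, ht⟩ := Ideal.mem_span_singleton'.mp
    (h ▸ Ideal.mem_span_singleton_self a)
  obtain ⟨s, hs⟩ := Ideal.mem_span_singleton'.mp
    (h.symm ▸ Ideal.mem_span_singleton_self x)
  obtain ⟨k, he⟩ := exists_idem_pow ((t*s))
  have hxw : ∀ j : ℕ, x * (t*s) ^ j = x := by
    intro j
    induction j with
    | zero => simp
    | succ j ih =>
      rw [pow_succ, ← mul_assoc, ih]
      linear_combination s * ht + hs
  have hxe : x * (t*s) ^ (k+1) = x := hxw (k+1)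
  set u : R := (t*s)^(k+1) * t + (1 - (t*s)^(k+1)) with hu
  have hinj : Function.Injective (fun z : R => u * z) := by
    intro z1 z2 hz12
    have hz : u * (z1 - z2) = 0 := by
      simp only at hz12
      linear_combination hz12
    set z := z1 - z2 with hzdef
    have h1 : (t*s)^(k+1) * t * z = 0 := by
      linear_combination (t*s)^(k+1) * hz + (z - t*z) * he
    have h3 : (t*s)^(k+1) * z = 0 := by
      linear_combination (s * (t*s)^k) * h1 - z * he
    have h2 : z = 0 := by linear_combination hz - h1 + h3
    exact sub_eq_zero.mp h2
  have hsurj := (Finite.injective_iff_surjective).mp hinj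
  obtain ⟨v, hv⟩ := hsurj 1
  have hunit : IsUnit u := IsUnit.of_mul_eq_one (a := u) v hv
  refine ⟨hunit.unit, ?_⟩
  rw [IsUnit.unit_spec]
  linear_combination (1 - t) * hxe - ht

lemma Bmat_nonneg (β : R → ℝ) (hβ : ∀ x, 0 ≤ β x) (a b : R) :
    0 ≤ Bmat R β a b :=
  Finset.sum_nonneg fun r _ => hβ r

lemma Bmat_row_sum (β : R → ℝ) (hβsum : ∑ x, β x = 1) (a : R) :
    ∑ b, Bmat R β a b = 1 := by
  rw [← hβsum]
  exact Finset.sum_fiberwise_of_maps_to (fun r _ => Finset.mem_univ (a * r)) β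

lemma Mmat_mul_unit (α : ℝ) (β : R → ℝ) (u : Rˣ) (a b : R) :
    Mmat R α β (a * u) (b * u) = Mmat R α β a b := by
  unfold Mmat Bmat
  congr 2
  apply Finset.sum_congr _ (fun _ _ => rfl)
  apply Finset.filter_congr
  intro r _
  constructor
  · intro hr
    have : a * r * u = b * u := by linear_combination hr
    exact (Units.mul_left_inj u).mp this
  · intro hr
    linear_combination (u : R) * hr

/-- Uniqueness of the stationary distribution (contraction argument). -/
lemma stationary_unique (α : ℝ) (hα0 : 0 < α) (hα1 : α < 1)
    (β : R → ℝ) (hβ : ∀ x, 0 ≤ β x) (hβsum : ∑ x, β x = 1)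
    (p q : R → ℝ) (hpq : ∑ x, p x = ∑ x, q x)
    (hp : ∀ b, ∑ a, p a * Mmat R α β a b = p b)
    (hq : ∀ b, ∑ a, q a * Mmat R α β a b = q b) : p = q := by
  set d : R → ℝ := fun z => p z - q z with hd
  have hdsum : ∑ a, d a = 0 := by
    simp only [hd, Finset.sum_sub_distrib, hpq, sub_self]
  have hdb : ∀ b, d b = (1 - α) * ∑ a, d a * Bmat R β a b := by
    intro b
    have hstep : d b = ∑ a, d a * Mmat R α β a b := by
      simp only [hd, sub_mul, Finset.sum_sub_distrib, hp b, hq b]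
    rw [hstep]
    unfold Mmat
    have expand : ∀ a, d a * (α / (Fintype.card R : ℝ) + (1 - α) * Bmat R β a b)
        = (α / (Fintype.card R : ℝ)) * d a + (1 - α) * (d a * Bmat R β a b) :=
      fun a => by ring
    rw [Finset.sum_congr rfl (fun a _ => expand a), Finset.sum_add_distrib,
      ← Finset.mul_sum, hdsum, mul_zero, zero_add, ← Finset.mul_sum]
  have habs : ∀ b, |d b| ≤ (1 - α) * ∑ a, |d a| * Bmat R β a b := by
    intro b
    rw [hdb b, abs_mul, abs_of_nonneg (by linarith : (0:ℝ) ≤ 1 - α)]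
    apply mul_le_mul_of_nonneg_left _ (by linarith : (0:ℝ) ≤ 1 - α)
    calc |∑ a, d a * Bmat R β a b| ≤ ∑ a, |d a * Bmat R β a b| :=
        Finset.abs_sum_le_sum_abs _ _
      _ = ∑ a, |d a| * Bmat R β a b := by
        apply Finset.sum_congr rfl
        intro a _
        rw [abs_mul, abs_of_nonneg (Bmat_nonneg β hβ a b)]
  have hsum_le : ∑ b, |d b| ≤ (1 - α) * ∑ a, |d a| := by
    calc ∑ b, |d b| ≤ ∑ b, (1 - α) * ∑ a, |d a| * Bmat R β a b :=
        Finset.sum_le_sum fun b _ => habs b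
      _ = (1 - α) * ∑ b, ∑ a, |d a| * Bmat R β a b := by rw [Finset.mul_sum]
      _ = (1 - α) * ∑ a, |d a| * ∑ b, Bmat R β a b := by
        rw [Finset.sum_comm]
        congr 1
        exact Finset.sum_congr rfl fun a _ => (Finset.mul_sum _ _ _).symm
      _ = (1 - α) * ∑ a, |d a| := by
        congr 1
        exact Finset.sum_congr rfl fun a _ => by rw [Bmat_row_sum β hβsum, mul_one]
  have hnn : 0 ≤ ∑ a, |d a| := Finset.sum_nonneg fun a _ => abs_nonneg _
  have hzero : ∑ a, |d a| = 0 := by nlinarith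
  funext z
  have h0 := (Finset.sum_eq_zero_iff_of_nonneg (fun a _ => abs_nonneg (d a))).mp
    hzero z (Finset.mem_univ z)
  have h1 : d z = 0 := abs_eq_zero.mp h0
  simpa [hd, sub_eq_zero] using h1

/-- A stationary distribution is invariant under multiplication by a unit. -/
lemma pi_mul_unit (α : ℝ) (hα0 : 0 < α) (hα1 : α < 1)
    (β : R → ℝ) (hβ : ∀ x, 0 ≤ β x) (hβsum : ∑ x, β x = 1)
    (π : R → ℝ) (hπstat : ∀ b : R, ∑ a : R, π a * Mmat R α β a b = π b)
    (u : Rˣ) (z : R) : π (z * u) = π z := by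
  have key : (fun z : R => π (z * u)) = π := by
    apply stationary_unique α hα0 hα1 β hβ hβsum _ _ ?_ ?_ hπstat
    · exact Fintype.sum_equiv (Units.mulRight u) _ _ (fun a => rfl)
    · intro b
      have step1 : ∀ a : R, π (a * u) * Mmat R α β a b
          = π (a * u) * Mmat R α β (a * u) (b * u) := by
        intro a
        rw [Mmat_mul_unit]
      rw [Finset.sum_congr rfl (fun a _ => step1 a)]
      have hre := Fintype.sum_equiv (Units.mulRight u)
        (fun a : R => π (a * u) * Mmat R α β (a * u) (b * u))
        (fun c : R => π c * Mmat R α β c (b * u)) (fun a => rfl)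
      rw [hre, hπstat (b * u)]
  exact congrFun key z

lemma mem_annId {x z : R} : z ∈ annId x ↔ z * x = 0 := Iff.rfl

lemma mk_eq_one_iff {x z : R} :
    Ideal.Quotient.mk (annId x) z = 1 ↔ (z - 1) * x = 0 := by
  rw [show (1 : R ⧸ annId x) = Ideal.Quotient.mk (annId x) 1 from rfl,
    Ideal.Quotient.eq]
  exact mem_annId

/-- The total `B`-weight flowing into `x` from its associates equals the
`β`-weight of the elements mapping to units of `R/ann(x)`. -/
lemma sum_assoc_eq (x : R) (β : R → ℝ) :
    ∑ a ∈ Finset.univ.filter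
        (fun a => Ideal.span ({a} : Set R) = Ideal.span ({x} : Set R)),
      Bmat R β a x
    = ∑ r ∈ Finset.univ.filter
        (fun r => IsUnit (Ideal.Quotient.mk (annId x) r)), β r := by
  unfold Bmat
  rw [Finset.sum_filter, Finset.sum_filter]
  simp only [Finset.sum_filter]
  have push : ∀ a : R,
      (if Ideal.span ({a} : Set R) = Ideal.span ({x} : Set R)
        then ∑ r : R, if a * r = x then β r else 0 else 0)
      = ∑ r : R, (if Ideal.span ({a} : Set R) = Ideal.span ({x} : Set R)
          then (if a * r = x then β r else 0) else 0) := by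
    intro a
    split_ifs with h
    · rfl
    · simp
  rw [Finset.sum_congr rfl (fun a _ => push a), Finset.sum_comm]
  apply Finset.sum_congr rfl
  intro r _
  by_cases hr : IsUnit (Ideal.Quotient.mk (annId x) r)
  · rw [if_pos hr]
    obtain ⟨v, hv⟩ := hr
    obtain ⟨s, hs⟩ := Ideal.Quotient.mk_surjective (I := annId x) (v⁻¹ : (R ⧸ annId x)ˣ)
    have hrs : (r * s - 1) * x = 0 := by
      apply mk_eq_one_iff.mp
      rw [map_mul, ← hv, hs]
      exact_mod_cast v.mul_inv
    set a₀ : R := x * s with ha₀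
    have ha₀r : a₀ * r = x := by linear_combination hrs
    have ha₀span : Ideal.span ({a₀} : Set R) = Ideal.span ({x} : Set R) := by
      apply le_antisymm
      · exact Ideal.span_singleton_le_span_singleton.mpr ⟨s, rfl⟩
      · exact Ideal.span_singleton_le_span_singleton.mpr ⟨r, ha₀r.symm⟩
    rw [Finset.sum_eq_single a₀]
    · rw [if_pos ha₀span, if_pos ha₀r]
    · intro b _ hb
      by_cases hbspan : Ideal.span ({b} : Set R) = Ideal.span ({x} : Set R)
      · rw [if_pos hbspan]
        have hnb : ¬ (b * r = x) := by
          intro hbr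
          apply hb
          obtain ⟨p, hp⟩ : x ∣ b :=
            Ideal.span_singleton_le_span_singleton.mp hbspan.le
          have hpr : (p * r - 1) * x = 0 := by
            rw [hp] at hbr
            linear_combination hbr
          rw [hp, ha₀]
          linear_combination s * hpr - p * hrs
        rw [if_neg hnb]
      · rw [if_neg hbspan]
    · intro h
      exact absurd (Finset.mem_univ a₀) h
  · rw [if_neg hr]
    apply Finset.sum_eq_zero
    intro b _
    by_cases hbspan : Ideal.span ({b} : Set R) = Ideal.span ({x} : Set R)
    · rw [if_pos hbspan]
      have hnb : ¬ (b * r = x) := by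
        intro hbr
        apply hr
        obtain ⟨p, hp⟩ : x ∣ b :=
          Ideal.span_singleton_le_span_singleton.mp hbspan.le
        have hpr : (p * r - 1) * x = 0 := by
          rw [hp] at hbr
          linear_combination hbr
        have hone : Ideal.Quotient.mk (annId x) (r * p) = 1 := by
          rw [mk_eq_one_iff]
          linear_combination hpr
        exact IsUnit.of_mul_eq_one _ (by rw [← map_mul, hone])
      rw [if_neg hnb]
    · rw [if_neg hbspan]

end AuxLemmas

/-- The recursion satisfied by the stationary distribution of `M_R`:
`(1 − (1−α)·∑_{r∈F_x} β(r))·π(x)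
  = α/|R| + (1−α)·∑_{y : xR ⊊ yR} (∑_{r : y·r = x} β(r))·π(y)`. -/
theorem stmt14 (R : Type) [CommRing R] [Fintype R]
    (α : ℝ) (hα0 : 0 < α) (hα1 : α < 1)
    (β : R → ℝ) (hβ : ∀ x, 0 ≤ β x) (hβsum : ∑ x, β x = 1)
    (π : R → ℝ) (hπ0 : ∀ x, 0 ≤ π x) (hπsum : ∑ x, π x = 1)
    (hπstat : ∀ b : R, ∑ a : R, π a * Mmat R α β a b = π b) :
    ∀ x : R,
      (1 - (1 - α) *
          ∑ r ∈ Finset.univ.filter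
            (fun r => IsUnit (Ideal.Quotient.mk (annId x) r)), β r) * π x =
        α / (Fintype.card R : ℝ) +
          (1 - α) *
            ∑ y ∈ Finset.univ.filter
              (fun y => Ideal.span ({x} : Set R) < Ideal.span {y}),
              (∑ r ∈ Finset.univ.filter (fun r => y * r = x), β r) * π y := by
  intro x
  set F : ℝ := ∑ r ∈ Finset.univ.filter
      (fun r => IsUnit (Ideal.Quotient.mk (annId x) r)), β r with hF
  set T : ℝ := ∑ y ∈ Finset.univ.filter
      (fun y => Ideal.span ({x} : Set R) < Ideal.span {y}),
      (∑ r ∈ Finset.univ.filter (fun r => y * r = x), β r) * π y with hT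
  set S : ℝ := ∑ a, π a * Bmat R β a x with hS
  -- π x = α/|R| + (1-α) S
  have hexp : π x = α / (Fintype.card R : ℝ) + (1 - α) * S := by
    rw [← hπstat x, hS]
    unfold Mmat
    have expand : ∀ a, π a * (α / (Fintype.card R : ℝ) + (1 - α) * Bmat R β a x)
        = (α / (Fintype.card R : ℝ)) * π a + (1 - α) * (π a * Bmat R β a x) :=
      fun a => by ring
    rw [Finset.sum_congr rfl (fun a _ => expand a), Finset.sum_add_distrib,
      ← Finset.mul_sum, hπsum, mul_one, ← Finset.mul_sum]
  -- split S
  have hsplit : S = T + ∑ a ∈ Finset.univ.filter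
      (fun a => ¬ Ideal.span ({x} : Set R) < Ideal.span {a}),
      π a * Bmat R β a x := by
    rw [hS, ← Finset.sum_filter_add_sum_filter_not Finset.univ
      (fun a => Ideal.span ({x} : Set R) < Ideal.span {a})
      (fun a => π a * Bmat R β a x)]
    congr 1
    rw [hT]
    apply Finset.sum_congr rfl
    intro y _
    rw [mul_comm]
    exact rfl
  -- the non-strict part reduces to the associates of x
  have hnotlt : ∑ a ∈ Finset.univ.filter
      (fun a => ¬ Ideal.span ({x} : Set R) < Ideal.span {a}),
      π a * Bmat R β a x
      = ∑ a ∈ Finset.univ.filter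
      (fun a => Ideal.span ({a} : Set R) = Ideal.span ({x} : Set R)),
      π a * Bmat R β a x := by
    apply (Finset.sum_subset ?_ ?_).symm
    · intro a ha
      simp only [Finset.mem_filter, Finset.mem_univ, true_and] at *
      rw [ha]
      exact lt_irrefl _
    · intro a ha hna
      simp only [Finset.mem_filter, Finset.mem_univ, true_and] at ha hna
      have hB : Bmat R β a x = 0 := by
        unfold Bmat
        apply Finset.sum_eq_zero
        intro r hrmem
        simp only [Finset.mem_filter, Finset.mem_univ, true_and] at hrmem
        exfalso
        have hle : Ideal.span ({x} : Set R) ≤ Ideal.span ({a} : Set R) :=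
          Ideal.span_singleton_le_span_singleton.mpr ⟨r, hrmem.symm⟩
        have hne : Ideal.span ({x} : Set R) ≠ Ideal.span ({a} : Set R) :=
          fun hcontra => hna hcontra.symm
        exact ha (hle.lt_of_ne hne)
      rw [hB, mul_zero]
  -- on associates, π is constant
  have hassoc : ∑ a ∈ Finset.univ.filter
      (fun a => Ideal.span ({a} : Set R) = Ideal.span ({x} : Set R)),
      π a * Bmat R β a x = π x * F := by
    have hπconst : ∀ a ∈ Finset.univ.filter
        (fun a => Ideal.span ({a} : Set R) = Ideal.span ({x} : Set R)),
        π a * Bmat R β a x = π x * Bmat R β a x := by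
      intro a ha
      simp only [Finset.mem_filter, Finset.mem_univ, true_and] at ha
      obtain ⟨u, hu⟩ := unit_of_span_eq ha
      rw [hu, pi_mul_unit α hα0 hα1 β hβ hβsum π hπstat u x]
    rw [Finset.sum_congr rfl hπconst, ← Finset.mul_sum, hF, sum_assoc_eq]
  have hSfinal : S = T + π x * F := by rw [hsplit, hnotlt, hassoc]
  linear_combination hexp + (1 - α) * hSfinal
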